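/- Exact clone collapsing: with M, x, x', M', w', p₂ and r₂ as above (so r₂(x') = r₂(x)), define w₁: M → (0,∞) by w₁(y) = w'(y) for y ≠ x and w₁(x) = w'(x) + w'(x'), and let r₁ be the unique minimizer of the weighted objective over M with weights w₁ and win rates given by the restriction of p₂ to M. Then r₁(y) = r₂(y) for all y ∈ M. -/
import Mathlib
open Real Finset

noncomputable def LL (u v : ℝ) : ℝ := Real.log (Real.exp u / (Real.exp u + Real.exp v))

lemma LL_eq (u v : ℝ) : LL u v = u - Real.log (Real.exp u + Real.exp v) := by
  have h : (0:ℝ) < Real.exp u + Real.exp v := by positivity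
  rw [LL, Real.log_div (Real.exp_ne_zero u) (ne_of_gt h), Real.log_exp]

lemma LL_self (u : ℝ) : LL u u = -Real.log 2 := by
  rw [LL_eq]
  have : Real.exp u + Real.exp u = 2 * Real.exp u := by ring
  rw [this, Real.log_mul (by norm_num) (Real.exp_ne_zero u), Real.log_exp]
  ring

lemma LL_pair_le (u v : ℝ) : LL u v + LL v u ≤ -(2 * Real.log 2) := by
  rw [LL_eq, LL_eq, add_comm (Real.exp v) (Real.exp u)]
  have h1 : 2 * Real.exp ((u+v)/2) ≤ Real.exp u + Real.exp v := by
    have hs := sq_nonneg (Real.exp (u/2) - Real.exp (v/2))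
    have e1 : Real.exp (u/2) * Real.exp (v/2) = Real.exp ((u+v)/2) := by
      rw [← Real.exp_add]; ring_nf
    have e2 : Real.exp (u/2) * Real.exp (u/2) = Real.exp u := by
      rw [← Real.exp_add]; ring_nf
    have e3 : Real.exp (v/2) * Real.exp (v/2) = Real.exp v := by
      rw [← Real.exp_add]; ring_nf
    nlinarith
  have h2 : Real.log (2 * Real.exp ((u+v)/2)) ≤ Real.log (Real.exp u + Real.exp v) :=
    Real.log_le_log (by positivity) h1
  rw [Real.log_mul (by norm_num) (Real.exp_ne_zero _), Real.log_exp] at h2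
  linarith

lemma LL_pair_eq {u v : ℝ} (h : -(2 * Real.log 2) ≤ LL u v + LL v u) : u = v := by
  rw [LL_eq, LL_eq, add_comm (Real.exp v) (Real.exp u)] at h
  have h2 : Real.log (Real.exp u + Real.exp v) ≤ Real.log (2 * Real.exp ((u+v)/2)) := by
    rw [Real.log_mul (by norm_num) (Real.exp_ne_zero _), Real.log_exp]; linarith
  have h3 : Real.exp u + Real.exp v ≤ 2 * Real.exp ((u+v)/2) := by
    have := Real.exp_le_exp.mpr h2
    rwa [Real.exp_log (by positivity), Real.exp_log (by positivity)] at this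
  have e1 : Real.exp (u/2) * Real.exp (v/2) = Real.exp ((u+v)/2) := by
    rw [← Real.exp_add]; ring_nf
  have e2 : Real.exp (u/2) * Real.exp (u/2) = Real.exp u := by
    rw [← Real.exp_add]; ring_nf
  have e3 : Real.exp (v/2) * Real.exp (v/2) = Real.exp v := by
    rw [← Real.exp_add]; ring_nf
  have h4 : (Real.exp (u/2) - Real.exp (v/2))^2 ≤ 0 := by nlinarith
  have h5 : Real.exp (u/2) = Real.exp (v/2) := by nlinarith [sq_nonneg (Real.exp (u/2) - Real.exp (v/2))]
  have := Real.exp_injective h5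
  linarith

lemma LL_midpoint (a b c d : ℝ) : (LL a b + LL c d)/2 ≤ LL ((a+c)/2) ((b+d)/2) := by
  rw [LL_eq, LL_eq, LL_eq]
  have key : Real.log (Real.exp ((a+c)/2) + Real.exp ((b+d)/2)) ≤
      (Real.log (Real.exp a + Real.exp b) + Real.log (Real.exp c + Real.exp d))/2 := by
    set A := Real.exp (a/2); set B := Real.exp (b/2)
    set C := Real.exp (c/2); set D := Real.exp (d/2)
    have hA : 0 < A := Real.exp_pos _
    have hB : 0 < B := Real.exp_pos _
    have hC : 0 < C := Real.exp_pos _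
    have hD : 0 < D := Real.exp_pos _
    have e1 : Real.exp ((a+c)/2) = A * C := by rw [← Real.exp_add]; ring_nf
    have e2 : Real.exp ((b+d)/2) = B * D := by rw [← Real.exp_add]; ring_nf
    have e3 : Real.exp a = A * A := by rw [← Real.exp_add]; ring_nf
    have e4 : Real.exp b = B * B := by rw [← Real.exp_add]; ring_nf
    have e5 : Real.exp c = C * C := by rw [← Real.exp_add]; ring_nf
    have e6 : Real.exp d = D * D := by rw [← Real.exp_add]; ring_nf
    rw [e1, e2, e3, e4, e5, e6]
    have hcs : (A*C + B*D)^2 ≤ (A*A + B*B) * (C*C + D*D) := by nlinarith [sq_nonneg (A*D - B*C)]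
    have h1 : Real.log ((A*C + B*D)^2) ≤ Real.log ((A*A + B*B) * (C*C + D*D)) :=
      Real.log_le_log (by positivity) hcs
    rw [Real.log_pow, Real.log_mul (by positivity) (by positivity)] at h1
    push_cast at h1
    linarith
  linarith


noncomputable def Pfun {M : Type*} [DecidableEq M] (x : M) (ρ : M → ℝ) (u v : ℝ) :
    Option M → ℝ
  | none => u
  | some y => if y = x then v else ρ y

@[simp] lemma Pfun_none {M : Type*} [DecidableEq M] (x : M) (ρ : M → ℝ) (u v : ℝ) :
    Pfun x ρ u v none = u := rfl

@[simp] lemma Pfun_some {M : Type*} [DecidableEq M] (x : M) (ρ : M → ℝ) (u v : ℝ) (y : M) :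
    Pfun x ρ u v (some y) = if y = x then v else ρ y := rfl

lemma sum_ite_decomp {M : Type*} [Fintype M] [DecidableEq M] (x : M) (v : ℝ) (ρ : M → ℝ)
    (F : M → ℝ → ℝ) :
    ∑ y, F y (if y = x then v else ρ y) = (∑ y, F y (ρ y)) + (F x v - F x (ρ x)) := by
  have hpt : ∀ y : M, F y (if y = x then v else ρ y)
      = F y (ρ y) + (if y = x then F x v - F x (ρ x) else 0) := by
    intro y
    by_cases h : y = x
    · subst h; simp
    · simp [h]
  rw [Finset.sum_congr rfl fun y _ => hpt y, Finset.sum_add_distrib,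
    Finset.sum_ite_eq' Finset.univ x]
  simp

theorem weighted_mle_clone_collapsing {M : Type*} [Fintype M] [Nonempty M]
    [DecidableEq M] (x : M)
    (w' : Option M → ℝ) (hw' : ∀ a, 0 < w' a) (hw'1 : ∑ a, w' a = 1)
    (lam : ℝ) (hlam : 0 < lam)
    (p₂ : Option M → Option M → ℝ) (hp01 : ∀ a b, p₂ a b ∈ Set.Icc (0 : ℝ) 1)
    (hpsym : ∀ a b, p₂ a b + p₂ b a = 1) (hprefl : ∀ a, p₂ a a = 1/2)
    (hclone : ∀ y : Option M, p₂ none y = p₂ (some x) y ∧ p₂ y none = p₂ y (some x))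
    (f₂ : (Option M → ℝ) → ℝ)
    (hf₂ : ∀ r : Option M → ℝ,
      f₂ r = -(∑ a, ∑ b, w' a * w' b * p₂ a b *
              Real.log (Real.exp (r a) / (Real.exp (r a) + Real.exp (r b))))
            + lam / 2 * ∑ a, w' a * (r a)^2)
    (r₂ : Option M → ℝ) (hr₂ : ∀ r, f₂ r₂ ≤ f₂ r)
    (w₁ : M → ℝ)
    (hw₁ : ∀ y : M, w₁ y = if y = x then w' (some x) + w' none else w' (some y))
    (f₁ : (M → ℝ) → ℝ)
    (hf₁ : ∀ r : M → ℝ,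
      f₁ r = -(∑ a, ∑ b, w₁ a * w₁ b * p₂ (some a) (some b) *
              Real.log (Real.exp (r a) / (Real.exp (r a) + Real.exp (r b))))
            + lam / 2 * ∑ a, w₁ a * (r a)^2)
    (r₁ : M → ℝ) (hr₁ : ∀ r, f₁ r₁ ≤ f₁ r) :
    ∀ y : M, r₁ y = r₂ (some y) := by
  have hf₂' : ∀ r : Option M → ℝ,
      f₂ r = -(∑ a, ∑ b, w' a * w' b * p₂ a b * LL (r a) (r b))
            + lam / 2 * ∑ a, w' a * (r a)^2 := fun r => hf₂ r
  have hc1 : ∀ z, p₂ none z = p₂ (some x) z := fun z => (hclone z).1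
  have hc2 : ∀ z, p₂ z none = p₂ z (some x) := fun z => (hclone z).2
  -- atoms:  SA u = ∑ z, w' (some z) * p₂ (some x) (some z) * LL u (r₂ (some z))
  --         SB u = ∑ y, w' (some y) * p₂ (some y) (some x) * LL (r₂ (some y)) u
  have expand : ∀ u v : ℝ, f₂ (Pfun x (fun y => r₂ (some y)) u v) =
      -( w' none * w' none * (1/2) * LL u u
        + (w' none * (∑ z : M, w' (some z) * p₂ (some x) (some z) * LL u (r₂ (some z)))
            + w' none * w' (some x) * (1/2) * (LL u v - LL u (r₂ (some x))))
        + (w' none * (∑ y : M, w' (some y) * p₂ (some y) (some x) * LL (r₂ (some y)) u)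
            + w' none * w' (some x) * (1/2) * (LL v u - LL (r₂ (some x)) u))
        + (∑ y : M, w' (some y) * ∑ z : M, w' (some z) * p₂ (some y) (some z) * LL (r₂ (some y)) (r₂ (some z)))
        + w' (some x) * ((∑ z : M, w' (some z) * p₂ (some x) (some z) * LL v (r₂ (some z)))
            - (∑ z : M, w' (some z) * p₂ (some x) (some z) * LL (r₂ (some x)) (r₂ (some z))))
        + w' (some x) * ((∑ y : M, w' (some y) * p₂ (some y) (some x) * LL (r₂ (some y)) v)
            - (∑ y : M, w' (some y) * p₂ (some y) (some x) * LL (r₂ (some y)) (r₂ (some x))))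
        + w' (some x) * w' (some x) * (1/2) *
            (LL v v - LL v (r₂ (some x)) - LL (r₂ (some x)) v + LL (r₂ (some x)) (r₂ (some x))) )
      + lam/2 * (w' none * u^2 + ((∑ y : M, w' (some y) * (r₂ (some y))^2)
            + w' (some x) * (v^2 - (r₂ (some x))^2))) := by
    intro u v
    rw [hf₂']
    simp only [Fintype.sum_option, Pfun_none, Pfun_some, hc1, hc2, hprefl]
    have E1 : (∑ z : M, w' none * w' (some z) * p₂ (some x) (some z) * LL u (if z = x then v else r₂ (some z)))
        = w' none * (∑ z : M, w' (some z) * p₂ (some x) (some z) * LL u (r₂ (some z)))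
          + w' none * w' (some x) * p₂ (some x) (some x) * (LL u v - LL u (r₂ (some x))) := by
      rw [sum_ite_decomp x v (fun q => r₂ (some q))
        (fun z r => w' none * w' (some z) * p₂ (some x) (some z) * LL u r), Finset.mul_sum]
      exact congrArg₂ (· + ·) (Finset.sum_congr rfl fun z _ => by ring) (by ring)
    have E2 : ∀ (A : ℝ) (y : M),
        (∑ z : M, w' (some y) * w' (some z) * p₂ (some y) (some z) * LL A (if z = x then v else r₂ (some z)))
        = w' (some y) * (∑ z : M, w' (some z) * p₂ (some y) (some z) * LL A (r₂ (some z)))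
          + w' (some y) * w' (some x) * p₂ (some y) (some x) * (LL A v - LL A (r₂ (some x))) := by
      intro A y
      rw [sum_ite_decomp x v (fun q => r₂ (some q))
        (fun z r => w' (some y) * w' (some z) * p₂ (some y) (some z) * LL A r), Finset.mul_sum]
      exact congrArg₂ (· + ·) (Finset.sum_congr rfl fun z _ => by ring) (by ring)
    have E4 : (∑ y : M, w' (some y) * (if y = x then v else r₂ (some y))^2)
        = (∑ y : M, w' (some y) * (r₂ (some y))^2)
          + (w' (some x) * v^2 - w' (some x) * (r₂ (some x))^2) :=
      sum_ite_decomp x v (fun q => r₂ (some q)) (fun y r => w' (some y) * r^2)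
    simp only [E2]
    have E3 : (∑ y : M, (w' (some y) * w' none * p₂ (some y) (some x) * LL (if y = x then v else r₂ (some y)) u
          + (w' (some y) * (∑ z : M, w' (some z) * p₂ (some y) (some z) * LL (if y = x then v else r₂ (some y)) (r₂ (some z)))
            + w' (some y) * w' (some x) * p₂ (some y) (some x) * (LL (if y = x then v else r₂ (some y)) v - LL (if y = x then v else r₂ (some y)) (r₂ (some x))))))
        = (∑ y : M, (w' (some y) * w' none * p₂ (some y) (some x) * LL (r₂ (some y)) u
          + (w' (some y) * (∑ z : M, w' (some z) * p₂ (some y) (some z) * LL (r₂ (some y)) (r₂ (some z)))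
            + w' (some y) * w' (some x) * p₂ (some y) (some x) * (LL (r₂ (some y)) v - LL (r₂ (some y)) (r₂ (some x))))))
          + ((w' (some x) * w' none * p₂ (some x) (some x) * LL v u
          + (w' (some x) * (∑ z : M, w' (some z) * p₂ (some x) (some z) * LL v (r₂ (some z)))
            + w' (some x) * w' (some x) * p₂ (some x) (some x) * (LL v v - LL v (r₂ (some x)))))
            - (w' (some x) * w' none * p₂ (some x) (some x) * LL (r₂ (some x)) u
          + (w' (some x) * (∑ z : M, w' (some z) * p₂ (some x) (some z) * LL (r₂ (some x)) (r₂ (some z)))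
            + w' (some x) * w' (some x) * p₂ (some x) (some x) * (LL (r₂ (some x)) v - LL (r₂ (some x)) (r₂ (some x)))))) :=
      sum_ite_decomp x v (fun q => r₂ (some q))
        (fun y r => w' (some y) * w' none * p₂ (some y) (some x) * LL r u
          + (w' (some y) * (∑ z : M, w' (some z) * p₂ (some y) (some z) * LL r (r₂ (some z)))
            + w' (some y) * w' (some x) * p₂ (some y) (some x) * (LL r v - LL r (r₂ (some x)))))
    rw [E1, E3, E4]
    simp only [Finset.sum_add_distrib]
    have conv1 : (∑ y : M, w' (some y) * w' none * p₂ (some y) (some x) * LL (r₂ (some y)) u)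
        = w' none * ∑ y : M, w' (some y) * p₂ (some y) (some x) * LL (r₂ (some y)) u := by
      rw [Finset.mul_sum]; exact Finset.sum_congr rfl fun y _ => by ring
    have conv2 : (∑ y : M, w' (some y) * w' (some x) * p₂ (some y) (some x) * (LL (r₂ (some y)) v - LL (r₂ (some y)) (r₂ (some x))))
        = w' (some x) * ((∑ y : M, w' (some y) * p₂ (some y) (some x) * LL (r₂ (some y)) v)
            - (∑ y : M, w' (some y) * p₂ (some y) (some x) * LL (r₂ (some y)) (r₂ (some x)))) := by
      rw [mul_sub, Finset.mul_sum, Finset.mul_sum, ← Finset.sum_sub_distrib]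
      exact Finset.sum_congr rfl fun y _ => by ring
    rw [conv1, conv2]
    simp only [hprefl]
    ring
  have hPts : Pfun x (fun y => r₂ (some y)) (r₂ none) (r₂ (some x)) = r₂ := by
    funext a
    cases a with
    | none => rfl
    | some y =>
      simp only [Pfun_some]
      by_cases h : y = x
      · subst h; simp
      · simp [h]
  have hcomb :
      w' (some x) * f₂ (Pfun x (fun y => r₂ (some y)) (r₂ (some x)) (r₂ (some x)))
      + w' none * f₂ (Pfun x (fun y => r₂ (some y)) (r₂ none) (r₂ none))
      - (w' (some x) + w' none) * f₂ (Pfun x (fun y => r₂ (some y)) (r₂ none) (r₂ (some x)))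
      = w' none * w' (some x) * (w' none + w' (some x))
          * (Real.log 2 + (LL (r₂ none) (r₂ (some x)) + LL (r₂ (some x)) (r₂ none))/2) := by
    rw [expand, expand, expand]
    simp only [LL_self]
    ring
  have hge : 0 ≤
      w' (some x) * f₂ (Pfun x (fun y => r₂ (some y)) (r₂ (some x)) (r₂ (some x)))
      + w' none * f₂ (Pfun x (fun y => r₂ (some y)) (r₂ none) (r₂ none))
      - (w' (some x) + w' none) * f₂ (Pfun x (fun y => r₂ (some y)) (r₂ none) (r₂ (some x))) := by
    have h1 := hr₂ (Pfun x (fun y => r₂ (some y)) (r₂ (some x)) (r₂ (some x)))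
    have h2 := hr₂ (Pfun x (fun y => r₂ (some y)) (r₂ none) (r₂ none))
    rw [hPts]
    nlinarith [mul_le_mul_of_nonneg_left h1 (hw' (some x)).le,
      mul_le_mul_of_nonneg_left h2 (hw' none).le]
  have hE : -(2*Real.log 2) ≤ LL (r₂ none) (r₂ (some x)) + LL (r₂ (some x)) (r₂ none) := by
    rw [hcomb] at hge
    by_contra hlt
    push_neg at hlt
    have hc : 0 < w' none * w' (some x) * (w' none + w' (some x)) :=
      mul_pos (mul_pos (hw' none) (hw' (some x))) (add_pos (hw' none) (hw' (some x)))
    nlinarith [hge, hc, hlt]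
  have teq : r₂ none = r₂ (some x) := LL_pair_eq hE
  -- Part 2: collapsing identity
  have hf₁' : ∀ r : M → ℝ,
      f₁ r = -(∑ a, ∑ b, w₁ a * w₁ b * p₂ (some a) (some b) * LL (r a) (r b))
            + lam / 2 * ∑ a, w₁ a * (r a)^2 := fun r => hf₁ r
  have hw₁pos : ∀ y : M, 0 < w₁ y := by
    intro y
    rw [hw₁]
    split_ifs
    · exact add_pos (hw' (some x)) (hw' none)
    · exact hw' (some y)
  have hcollapse : ∀ g : M → ℝ,
      (∑ a : Option M, w' a * g (a.getD x)) = ∑ y : M, w₁ y * g y := by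
    intro g
    rw [Fintype.sum_option]
    simp only [Option.getD_some, Option.getD_none]
    have hpt : ∀ y : M, w₁ y * g y = w' (some y) * g y + (if y = x then w' none * g y else 0) := by
      intro y
      rw [hw₁]
      split_ifs with h
      · subst h; ring
      · ring
    rw [Finset.sum_congr rfl fun y _ => hpt y, Finset.sum_add_distrib,
      Finset.sum_ite_eq' Finset.univ x]
    simp only [Finset.mem_univ, if_true]
    ring
  have hpcol : ∀ a b : Option M, p₂ a b = p₂ (some (a.getD x)) (some (b.getD x)) := by
    intro a b
    cases a <;> cases b <;> simp only [Option.getD_none, Option.getD_some] <;>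
      first
        | rfl
        | rw [hc1, hc2]
        | rw [hc1]
        | rw [hc2]
  have hf₁f₂ : ∀ r : M → ℝ, f₁ r = f₂ (fun a => r (a.getD x)) := by
    intro r
    simp only [hf₁', hf₂']
    have hquad : (∑ a : Option M, w' a * (r (a.getD x))^2) = ∑ y : M, w₁ y * (r y)^2 :=
      hcollapse (fun y => (r y)^2)
    have hloss : (∑ a : Option M, ∑ b : Option M, w' a * w' b * p₂ a b * LL (r (a.getD x)) (r (b.getD x)))
        = ∑ a : M, ∑ b : M, w₁ a * w₁ b * p₂ (some a) (some b) * LL (r a) (r b) := by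
      have inner : ∀ a : Option M,
          (∑ b : Option M, w' a * w' b * p₂ a b * LL (r (a.getD x)) (r (b.getD x)))
          = w' a * ∑ z : M, w₁ z * (p₂ (some (a.getD x)) (some z) * LL (r (a.getD x)) (r z)) := by
        intro a
        rw [← hcollapse (fun z => p₂ (some (a.getD x)) (some z) * LL (r (a.getD x)) (r z)),
          Finset.mul_sum]
        exact Finset.sum_congr rfl fun b _ => by rw [hpcol a b]; ring
      rw [Finset.sum_congr rfl fun a _ => inner a,
        hcollapse (fun y => ∑ z : M, w₁ z * (p₂ (some y) (some z) * LL (r y) (r z)))]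
      exact Finset.sum_congr rfl fun y _ => by
        rw [Finset.mul_sum]
        exact Finset.sum_congr rfl fun z _ => by ring
    rw [hloss, hquad]
  have hbar : (fun a : Option M => r₂ (some (a.getD x))) = r₂ := by
    funext a
    cases a with
    | none => simpa using teq.symm
    | some y => rfl
  have hminbar : ∀ r : M → ℝ, f₁ (fun y => r₂ (some y)) ≤ f₁ r := by
    intro r
    calc f₁ (fun y => r₂ (some y)) = f₂ (fun a : Option M => r₂ (some (a.getD x))) :=
          hf₁f₂ (fun y => r₂ (some y))
      _ = f₂ r₂ := by rw [hbar]
      _ ≤ f₂ (fun a => r (a.getD x)) := hr₂ _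
      _ = f₁ r := (hf₁f₂ r).symm
  have heq1 : f₁ r₁ = f₁ (fun y => r₂ (some y)) := le_antisymm (hr₁ _) (hminbar r₁)
  -- Part 3: strict convexity at the midpoint
  have h2 : (∑ a : M, ∑ b : M, w₁ a * w₁ b * p₂ (some a) (some b) * LL (r₁ a) (r₁ b))
      + (∑ a : M, ∑ b : M, w₁ a * w₁ b * p₂ (some a) (some b) * LL (r₂ (some a)) (r₂ (some b)))
      ≤ 2 * ∑ a : M, ∑ b : M, w₁ a * w₁ b * p₂ (some a) (some b)
            * LL ((r₁ a + r₂ (some a))/2) ((r₁ b + r₂ (some b))/2) := by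
    rw [Finset.mul_sum, ← Finset.sum_add_distrib]
    refine Finset.sum_le_sum fun a _ => ?_
    rw [Finset.mul_sum, ← Finset.sum_add_distrib]
    refine Finset.sum_le_sum fun b _ => ?_
    have hm := LL_midpoint (r₁ a) (r₁ b) (r₂ (some a)) (r₂ (some b))
    have hcnn : 0 ≤ w₁ a * w₁ b * p₂ (some a) (some b) :=
      mul_nonneg (mul_nonneg (hw₁pos a).le (hw₁pos b).le) (hp01 _ _).1
    nlinarith [mul_le_mul_of_nonneg_left hm hcnn]
  have h3 : 2 * ((∑ a : M, w₁ a * (((r₁ a + r₂ (some a))/2))^2)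
        + ∑ a : M, w₁ a * (((r₁ a - r₂ (some a))/2))^2)
      = (∑ a : M, w₁ a * (r₁ a)^2) + ∑ a : M, w₁ a * (r₂ (some a))^2 := by
    rw [← Finset.sum_add_distrib, ← Finset.sum_add_distrib, Finset.mul_sum]
    exact Finset.sum_congr rfl fun a _ => by ring
  have hmid : f₁ (fun y => (r₁ y + r₂ (some y))/2)
      ≤ (f₁ r₁ + f₁ (fun y => r₂ (some y)))/2
        - lam/2 * ∑ a : M, w₁ a * (((r₁ a - r₂ (some a))/2))^2 := by
    simp only [hf₁']
    have hQm : (∑ a : M, w₁ a * (((r₁ a + r₂ (some a))/2))^2)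
        = ((∑ a : M, w₁ a * (r₁ a)^2) + ∑ a : M, w₁ a * (r₂ (some a))^2)/2
          - ∑ a : M, w₁ a * (((r₁ a - r₂ (some a))/2))^2 := by linarith [h3]
    rw [hQm]
    linarith [h2]
  have hDle : (∑ a : M, w₁ a * (((r₁ a - r₂ (some a))/2))^2) ≤ 0 := by
    have hfin := hminbar (fun y => (r₁ y + r₂ (some y))/2)
    nlinarith [hmid, hfin, heq1, hlam]
  have hDnn : ∀ a ∈ (Finset.univ : Finset M), 0 ≤ w₁ a * (((r₁ a - r₂ (some a))/2))^2 :=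
    fun a _ => mul_nonneg (hw₁pos a).le (sq_nonneg _)
  have hD0 : (∑ a : M, w₁ a * (((r₁ a - r₂ (some a))/2))^2) = 0 :=
    le_antisymm hDle (Finset.sum_nonneg hDnn)
  intro y
  have hy := (Finset.sum_eq_zero_iff_of_nonneg hDnn).mp hD0 y (Finset.mem_univ y)
  have hsq : (((r₁ y - r₂ (some y))/2))^2 = 0 := by
    rcases mul_eq_zero.mp hy with h | h
    · exact absurd h (hw₁pos y).ne'
    · exact h
  have := pow_eq_zero_iff (n := 2) (by norm_num) |>.mp hsq
  linarith [this]
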